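/- Let (K_1,…,K_n) be a Cantor-type graph-directed attractor in ℝ^d with level-k approximations Q_{i,k}, and let α ∈ {0,1}^d be a vertex of [0,1]^d. Then for each i ∈ {1,…,n}, α ∈ K_i if and only if α ∈ Q_{i,n}. -/

import Mathlib

open Set

/-- The closed unit cube `[0,1]^d` in `ℝ^d`. -/
def unitCube (d : ℕ) : Set (Fin d → ℝ) := {x | ∀ m, x m ∈ Set.Icc (0 : ℝ) 1}

/-- The contracting similarity `x ↦ N⁻¹(x + t)` on `ℝ^d`. -/
noncomputable def cmap {d : ℕ} (N : ℕ) (t : Fin d → ℕ) (x : Fin d → ℝ) : Fin d → ℝ :=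
  fun m => (x m + t m) / N

/-- The face of `[0,1]^d` determined by an index set `s` and prescribed values `a`
(`a m ∈ {0,1}` for `m ∈ s`); its dimension is `d - s.card`. -/
def face {d : ℕ} (s : Finset (Fin d)) (a : Fin d → ℝ) : Set (Fin d → ℝ) :=
  {x | x ∈ unitCube d ∧ ∀ m ∈ s, x m = a m}

/-- A Cantor-type graph-directed system: a finite directed multigraph on `Fin n`
in which every vertex has an outgoing edge, together with translation vectors
`t e ∈ {0,…,N-1}^d`; distinct parallel edges carry distinct vectors. -/
structure CantorGDS (d N n : ℕ) where
  E : Type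
  fintypeE : Fintype E
  src : E → Fin n
  dst : E → Fin n
  t : E → Fin d → ℕ
  t_lt : ∀ e m, t e m < N
  exists_out : ∀ v : Fin n, ∃ e : E, src e = v
  distinct : ∀ e e' : E, src e = src e' → dst e = dst e' → t e = t e' → e = e'

namespace CantorGDS

/-- The map `φ_e(x) = N⁻¹(x + t_e)` associated with an edge. -/
noncomputable def phi {d N n : ℕ} (S : CantorGDS d N n) (e : S.E) : (Fin d → ℝ) → (Fin d → ℝ) :=
  cmap N (S.t e)

/-- `(K 1, …, K n)` is the Cantor-type graph-directed attractor of `S`: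
an `n`-tuple of nonempty compact sets with `K i = ⋃_{j} ⋃_{e ∈ E_{i,j}} φ_e(K j)`. -/
def IsAttractor {d N n : ℕ} (S : CantorGDS d N n) (K : Fin n → Set (Fin d → ℝ)) : Prop :=
  (∀ i, (K i).Nonempty) ∧ (∀ i, IsCompact (K i)) ∧
    (∀ i, K i = ⋃ e : S.E, ⋃ _ : S.src e = i, S.phi e '' K (S.dst e))

/-- The level-`k` approximations: `Q 0 i = [0,1]^d` and
`Q (k+1) i = ⋃_{j} ⋃_{e ∈ E_{i,j}} φ_e(Q k j)`. -/
def Q {d N n : ℕ} (S : CantorGDS d N n) : ℕ → Fin n → Set (Fin d → ℝ)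
  | 0, _ => unitCube d
  | (k+1), i => ⋃ e : S.E, ⋃ _ : S.src e = i, S.phi e '' CantorGDS.Q S k (S.dst e)

/-- A solid edge from `(i,j)` to `(i',j')` in the intersecting graph:
`i ≠ j` and there are `e ∈ E_{i,i'}`, `e' ∈ E_{j,j'}` with `φ_e = φ_{e'}`. -/
def SolidEdge {d N n : ℕ} (S : CantorGDS d N n) (i j i' j' : Fin n) : Prop :=
  i ≠ j ∧ ∃ e e' : S.E, S.src e = i ∧ S.dst e = i' ∧ S.src e' = j ∧ S.dst e' = j' ∧
    S.t e = S.t e'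

/-- `e, e'` witness a dashed edge: the cubes `φ_e([0,1]^d)` and `φ_{e'}([0,1]^d)` share a
nonempty common face of dimension at most `d-1`; equivalently `t_e ≠ t_{e'}` and every
coordinate of `t_e - t_{e'}` lies in `{-1,0,1}`. -/
def DashedWitness {d N n : ℕ} (S : CantorGDS d N n) (e e' : S.E) : Prop :=
  S.t e ≠ S.t e' ∧ ∀ m, ((S.t e m : ℤ) - (S.t e' m : ℤ)).natAbs ≤ 1

/-- A terminated edge from `(i,j)` to `(i',j')` in the intersecting graph: either a solid
edge with `i' = j'`, or a dashed edge witnessed by `e, e'` with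
`φ_e(K i') ∩ φ_{e'}(K j') ≠ ∅`. -/
def TerminatedEdge {d N n : ℕ} (S : CantorGDS d N n) (K : Fin n → Set (Fin d → ℝ))
    (i j i' j' : Fin n) : Prop :=
  i ≠ j ∧ ∃ e e' : S.E, S.src e = i ∧ S.dst e = i' ∧ S.src e' = j ∧ S.dst e' = j' ∧
    ((S.t e = S.t e' ∧ i' = j') ∨
      (DashedWitness S e e' ∧ (S.phi e '' K i' ∩ S.phi e' '' K j').Nonempty))

/-- A solid walk of length `m` in the intersecting graph starting from `(i,j)`. -/
def SolidWalkOfLength {d N n : ℕ} (S : CantorGDS d N n) (m : ℕ) (i j : Fin n) : Prop :=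
  ∃ p q : ℕ → Fin n, p 0 = i ∧ q 0 = j ∧
    ∀ k < m, SolidEdge S (p k) (q k) (p (k + 1)) (q (k + 1))

/-- An infinite solid walk in the intersecting graph starting from `(i,j)`. -/
def InfSolidWalk {d N n : ℕ} (S : CantorGDS d N n) (i j : Fin n) : Prop :=
  ∃ p q : ℕ → Fin n, p 0 = i ∧ q 0 = j ∧
    ∀ k, SolidEdge S (p k) (q k) (p (k + 1)) (q (k + 1))

/-- A terminated finite walk in the intersecting graph starting from `(i,j)`: a walk of
length `m + 1` whose first `m` edges are solid and whose last edge is terminated. -/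
def TerminatedWalk {d N n : ℕ} (S : CantorGDS d N n) (K : Fin n → Set (Fin d → ℝ))
    (i j : Fin n) : Prop :=
  ∃ m : ℕ, ∃ p q : ℕ → Fin n, p 0 = i ∧ q 0 = j ∧
    (∀ k < m, SolidEdge S (p k) (q k) (p (k + 1)) (q (k + 1))) ∧
    TerminatedEdge S K (p m) (q m) (p (m + 1)) (q (m + 1))

/-- The edge relation of the graph `G_P`: there is an edge from `i` to `j` whenever
`P ∩ ⋃_{e ∈ E_{i,j}} φ_e([0,1]^d) ≠ ∅`. -/
def GPEdge {d N n : ℕ} (S : CantorGDS d N n) (P : Set (Fin d → ℝ)) (i j : Fin n) : Prop :=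
  ∃ e : S.E, S.src e = i ∧ S.dst e = j ∧ (P ∩ S.phi e '' unitCube d).Nonempty

/-- There is a walk of length `k` in the graph `G_P` starting from `i`. -/
def GPWalk {d N n : ℕ} (S : CantorGDS d N n) (P : Set (Fin d → ℝ)) (i : Fin n) (k : ℕ) :
    Prop :=
  ∃ p : ℕ → Fin n, p 0 = i ∧ ∀ l < k, GPEdge S P (p l) (p (l + 1))

/-- `l` is a walk in the directed graph of `S` starting from vertex `i`. -/
def WalkFrom {d N n : ℕ} (S : CantorGDS d N n) (i : Fin n) (l : List S.E) : Prop :=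
  (∀ e ∈ l.head?, S.src e = i) ∧ List.Chain' (fun e e' => S.dst e = S.src e') l

/-- The terminal vertex of a walk `l` starting from `i` (equal to `i` if `l` is empty). -/
def ter {d N n : ℕ} (S : CantorGDS d N n) (i : Fin n) (l : List S.E) : Fin n :=
  l.getLast?.elim i S.dst

/-- For a walk `𝐞 = (e_1, …, e_k)`, the composition `φ_𝐞 = φ_{e_1} ∘ ⋯ ∘ φ_{e_k}`. -/
noncomputable def phiWalk {d N n : ℕ} (S : CantorGDS d N n) (l : List S.E) :
    (Fin d → ℝ) → (Fin d → ℝ) :=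
  l.foldr (fun e f => S.phi e ∘ f) id

/-- For an infinite walk `e`, the composition `φ_{e 0} ∘ ⋯ ∘ φ_{e (m-1)}` of its first
`m` maps. -/
noncomputable def compWalk {d N n : ℕ} (S : CantorGDS d N n) (e : ℕ → S.E) :
    ℕ → (Fin d → ℝ) → (Fin d → ℝ)
  | 0 => id
  | (m + 1) => CantorGDS.compWalk S e m ∘ S.phi (e m)

end CantorGDS

/-- The constant `c(n,d) = (d-1)n² + (n²+n)/2 + d - 1`. -/
def cConst (n d : ℕ) : ℕ := (d - 1) * n ^ 2 + (n ^ 2 + n) / 2 + d - 1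

section AuxLemmas

variable {d N n : ℕ} (S : CantorGDS d N n)

lemma aux_phi_mem_cube (hN : 2 ≤ N) (e : S.E) {x : Fin d → ℝ} (hx : x ∈ unitCube d) :
    S.phi e x ∈ unitCube d := by
  have hN0 : (0:ℝ) < N := by exact_mod_cast (by omega : 0 < N)
  intro m
  have h1 := hx m
  have h2 : (S.t e m : ℝ) + 1 ≤ N := by exact_mod_cast S.t_lt e m
  have ht0 : (0:ℝ) ≤ S.t e m := Nat.cast_nonneg _
  simp only [CantorGDS.phi, cmap, Set.mem_Icc]
  constructor
  · apply div_nonneg _ hN0.le; linarith [h1.1]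
  · rw [div_le_one hN0]; linarith [h1.2]

lemma aux_phi_dist (hN : 2 ≤ N) (e : S.E) (x y : Fin d → ℝ) :
    dist (S.phi e x) (S.phi e y) ≤ dist x y / N := by
  have hN0 : (0:ℝ) < N := by exact_mod_cast (by omega : 0 < N)
  rw [dist_pi_le_iff (by positivity)]
  intro m
  have h := dist_le_pi_dist x y m
  simp only [CantorGDS.phi, cmap, Real.dist_eq] at *
  have hre : (x m + S.t e m) / N - (y m + S.t e m) / N = (x m - y m) / N := by ring
  rw [hre, abs_div, abs_of_pos hN0]
  gcongr

lemma aux_cube_closed : IsClosed (unitCube d) := by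
  have : unitCube d = ⋂ m, (fun x : Fin d → ℝ => x m) ⁻¹' Set.Icc (0:ℝ) 1 := by
    ext x; simp [unitCube, Set.mem_iInter]
  rw [this]
  exact isClosed_iInter fun m => isClosed_Icc.preimage (continuous_apply m)

lemma aux_zero_mem_cube : (0 : Fin d → ℝ) ∈ unitCube d := by
  intro m; simp

lemma aux_K_sub_cube (hN : 2 ≤ N) (K : Fin n → Set (Fin d → ℝ)) (hK : S.IsAttractor K) :
    ∀ i, K i ⊆ unitCube d := by
  obtain ⟨hne, hcpt, heq⟩ := hK
  have hN0 : (0:ℝ) < N := by exact_mod_cast (by omega : 0 < N)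
  have hb : Bornology.IsBounded (⋃ i, K i) := (isCompact_iUnion hcpt).isBounded
  obtain ⟨R, hR⟩ := hb.subset_closedBall 0
  have key : ∀ k, ∀ i, ∀ x ∈ K i, ∃ z ∈ unitCube d, dist x z ≤ R / N ^ k := by
    intro k
    induction k with
    | zero =>
      intro i x hx
      refine ⟨0, aux_zero_mem_cube, ?_⟩
      have := hR (Set.mem_iUnion.2 ⟨i, hx⟩)
      simpa using this
    | succ k ih =>
      intro i x hx
      rw [heq i] at hx
      simp only [Set.mem_iUnion] at hx
      obtain ⟨e, he, y, hy, rfl⟩ := hx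
      obtain ⟨z, hz, hzd⟩ := ih (S.dst e) y hy
      refine ⟨S.phi e z, aux_phi_mem_cube S hN e hz, ?_⟩
      calc dist (S.phi e y) (S.phi e z) ≤ dist y z / N := aux_phi_dist S hN e y z
        _ ≤ (R / N ^ k) / N := by gcongr
        _ = R / N ^ (k + 1) := by rw [div_div, pow_succ]
  intro i x hx
  rw [← aux_cube_closed.closure_eq, Metric.mem_closure_iff]
  intro ε hε
  have h1N : (1 / N : ℝ) < 1 := by rw [div_lt_one hN0]; exact_mod_cast (by omega : 1 < N)
  obtain ⟨k, hk⟩ := exists_pow_lt_of_lt_one (show (0:ℝ) < ε / (|R| + 1) by positivity) h1N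
  obtain ⟨z, hz, hzd⟩ := key k i x hx
  refine ⟨z, hz, lt_of_le_of_lt hzd ?_⟩
  have habs : |R| + 1 > 0 := by positivity
  calc R / N ^ k ≤ (|R| + 1) / N ^ k := by
        rw [div_le_div_iff_of_pos_right (by positivity)]
        linarith [le_abs_self R]
    _ = (|R| + 1) * (1 / N) ^ k := by rw [div_pow, one_pow]; ring
    _ < (|R| + 1) * (ε / (|R| + 1)) := by gcongr
    _ = ε := by field_simp

lemma aux_vertex_pull (hN : 2 ≤ N) (e : S.E) {α y : Fin d → ℝ}
    (hα : ∀ m, α m = 0 ∨ α m = 1) (hy : y ∈ unitCube d) (h : S.phi e y = α) :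
    y = α ∧ S.phi e α = α := by
  have hN0 : (0:ℝ) < N := by exact_mod_cast (by omega : 0 < N)
  have key : ∀ m, y m = α m ∧ (α m + S.t e m) / N = α m := by
    intro m
    have h1 := congrFun h m
    simp only [CantorGDS.phi, cmap] at h1
    rw [div_eq_iff hN0.ne'] at h1
    have ht : (S.t e m : ℝ) + 1 ≤ N := by exact_mod_cast S.t_lt e m
    have ht0 : (0:ℝ) ≤ S.t e m := Nat.cast_nonneg _
    have hy1 := hy m
    rcases hα m with h0 | h1'
    · rw [h0] at h1 ⊢
      have hy0 : y m = 0 := by have := hy1.1; linarith [h1]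
      have ht0' : (S.t e m : ℝ) = 0 := by linarith [hy1.1, h1]
      rw [ht0']
      exact ⟨hy0, by simp⟩
    · rw [h1'] at h1 ⊢
      have hy2 : y m = 1 := by have := hy1.2; linarith
      have ht1 : (S.t e m : ℝ) = N - 1 := by linarith
      rw [ht1]
      refine ⟨hy2, ?_⟩
      field_simp
      ring
  constructor
  · funext m; exact (key m).1
  · funext m
    simpa only [CantorGDS.phi, cmap] using (key m).2

lemma aux_Q_sub_cube (hN : 2 ≤ N) : ∀ k i, CantorGDS.Q S k i ⊆ unitCube d := by
  intro k
  induction k with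
  | zero => intro i x hx; exact hx
  | succ k ih =>
    intro i x hx
    simp only [CantorGDS.Q, Set.mem_iUnion] at hx
    obtain ⟨e, he, y, hy, rfl⟩ := hx
    exact aux_phi_mem_cube S hN e (ih _ hy)

lemma aux_mem_Q_succ (hN : 2 ≤ N) {α : Fin d → ℝ} (hα : ∀ m, α m = 0 ∨ α m = 1)
    (k : ℕ) (i : Fin n) :
    α ∈ CantorGDS.Q S (k + 1) i ↔
      ∃ e, S.src e = i ∧ S.phi e α = α ∧ α ∈ CantorGDS.Q S k (S.dst e) := by
  constructor
  · intro h
    simp only [CantorGDS.Q, Set.mem_iUnion] at h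
    obtain ⟨e, he, y, hy, hphi⟩ := h
    obtain ⟨hyα, hfix⟩ := aux_vertex_pull S hN e hα (aux_Q_sub_cube S hN k _ hy) hphi
    exact ⟨e, he, hfix, by rwa [hyα] at hy⟩
  · rintro ⟨e, he, hfix, hQ⟩
    simp only [CantorGDS.Q, Set.mem_iUnion]
    exact ⟨e, he, α, hQ, hfix⟩

lemma aux_mem_K_iff (hN : 2 ≤ N) (K : Fin n → Set (Fin d → ℝ)) (hK : S.IsAttractor K)
    {α : Fin d → ℝ} (hα : ∀ m, α m = 0 ∨ α m = 1) (i : Fin n) :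
    α ∈ K i ↔ ∃ e, S.src e = i ∧ S.phi e α = α ∧ α ∈ K (S.dst e) := by
  have hsub := aux_K_sub_cube S hN K hK
  obtain ⟨hne, hcpt, heq⟩ := hK
  constructor
  · intro h
    rw [heq i] at h
    simp only [Set.mem_iUnion] at h
    obtain ⟨e, he, y, hy, hphi⟩ := h
    obtain ⟨hyα, hfix⟩ := aux_vertex_pull S hN e hα (hsub _ hy) hphi
    exact ⟨e, he, hfix, by rwa [hyα] at hy⟩
  · rintro ⟨e, he, hfix, hKd⟩
    rw [heq i]
    simp only [Set.mem_iUnion]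
    exact ⟨e, he, α, hKd, hfix⟩

lemma aux_alpha_mem_cube {α : Fin d → ℝ} (hα : ∀ m, α m = 0 ∨ α m = 1) :
    α ∈ unitCube d := by
  intro m; rcases hα m with h | h <;> simp [h]

end AuxLemmas

/-- **Corollary.** For a vertex `α ∈ {0,1}^d` of the unit cube and each `i`,
`α ∈ K i` iff `α ∈ Q_{i,n}`. -/
theorem vertex_mem_attractor_iff_mem_approx
    {d N n : ℕ} (hd : 1 ≤ d) (hN : 2 ≤ N) (hn : 1 ≤ n)
    (S : CantorGDS d N n) (K : Fin n → Set (Fin d → ℝ)) (hK : S.IsAttractor K)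
    (α : Fin d → ℝ) (hα : ∀ m, α m = 0 ∨ α m = 1) (i : Fin n) :
    α ∈ K i ↔ α ∈ CantorGDS.Q S n i := by
  classical
  have hN0 : (0:ℝ) < N := by exact_mod_cast (by omega : 0 < N)
  constructor
  · -- forward: K i ⊆ Q k i for every k
    have fwd : ∀ k i, α ∈ K i → α ∈ CantorGDS.Q S k i := by
      intro k
      induction k with
      | zero => intro i _; exact aux_alpha_mem_cube hα
      | succ k ih =>
        intro i h
        obtain ⟨e, he, hfix, hKd⟩ := (aux_mem_K_iff S hN K hK hα i).mp h
        exact (aux_mem_Q_succ S hN hα k i).mpr ⟨e, he, hfix, ih _ hKd⟩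
    exact fwd n i
  · intro h
    set A : ℕ → Finset (Fin n) :=
      fun k => Finset.univ.filter (fun j => α ∈ CantorGDS.Q S k j) with hA
    have hstep : ∀ k j, j ∈ A (k + 1) ↔
        ∃ e, S.src e = j ∧ S.phi e α = α ∧ S.dst e ∈ A k := by
      intro k j
      simp only [hA, Finset.mem_filter, Finset.mem_univ, true_and]
      rw [aux_mem_Q_succ S hN hα k j]
    have hanti : ∀ k, A (k + 1) ⊆ A k := by
      intro k
      induction k with
      | zero =>
        intro j _
        simp only [hA, Finset.mem_filter, Finset.mem_univ, true_and]
        exact aux_alpha_mem_cube hα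
      | succ k ih =>
        intro j hj
        rw [hstep] at hj ⊢
        obtain ⟨e, h1, h2, h3⟩ := hj
        exact ⟨e, h1, h2, ih h3⟩
    have hdeter : ∀ k, A k = A (k + 1) → A (k + 1) = A (k + 2) := by
      intro k hk
      ext j
      rw [hstep, hstep, ← hk]
    have hstab : A n = A (n + 1) := by
      by_cases hcase : ∃ k < n, A k = A (k + 1)
      · obtain ⟨k, hk, he⟩ := hcase
        have hall : ∀ m, A (k + m) = A (k + m + 1) := by
          intro m
          induction m with
          | zero => simpa using he
          | succ m ih => exact hdeter _ ih
        have := hall (n - k)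
        rwa [Nat.add_sub_cancel' hk.le] at this
      · push_neg at hcase
        have hcard : ∀ k ≤ n, (A k).card + k ≤ (A 0).card := by
          intro k hk
          induction k with
          | zero => simp
          | succ k ih =>
            have h1 := ih (by omega)
            have h2 : (A (k + 1)).card < (A k).card :=
              Finset.card_lt_card
                (lt_of_le_of_ne (hanti k) (fun hh => hcase k (by omega) hh.symm))
            omega
        have h0 : (A 0).card ≤ n := by
          calc (A 0).card ≤ Finset.univ.card := Finset.card_filter_le _ _
            _ = n := Finset.card_univ.trans (Fintype.card_fin n)
        have hAn : A n = ∅ := by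
          have := hcard n le_rfl
          exact Finset.card_eq_zero.mp (by omega)
        have hAn1 : A (n + 1) = ∅ := Finset.subset_empty.mp (hAn ▸ hanti n)
        rw [hAn, hAn1]
    have hB : ∀ j ∈ A n, ∃ e, S.src e = j ∧ S.phi e α = α ∧ S.dst e ∈ A n := by
      intro j hj
      rw [hstab] at hj
      exact (hstep n j).mp hj
    have hKcube := aux_K_sub_cube S hN K hK
    obtain ⟨hne, hcpt, heq⟩ := hK
    have happrox : ∀ m, ∀ j ∈ A n, ∃ x ∈ K j, dist x α ≤ (1 / N : ℝ) ^ m := by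
      intro m
      induction m with
      | zero =>
        intro j _
        obtain ⟨x, hx⟩ := hne j
        refine ⟨x, hx, ?_⟩
        simp only [pow_zero]
        rw [dist_pi_le_iff zero_le_one]
        intro m'
        have h1 := hKcube j hx m'
        have h2 : α m' ∈ Set.Icc (0:ℝ) 1 := aux_alpha_mem_cube hα m'
        rw [Real.dist_eq, abs_sub_le_iff]
        constructor <;> linarith [h1.1, h1.2, h2.1, h2.2]
      | succ m ih =>
        intro j hj
        obtain ⟨e, hsrc, hfix, hdst⟩ := hB j hj
        obtain ⟨y, hy, hyd⟩ := ih (S.dst e) hdst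
        refine ⟨S.phi e y, ?_, ?_⟩
        · rw [heq j]
          exact Set.mem_iUnion.2 ⟨e, Set.mem_iUnion.2 ⟨hsrc, ⟨y, hy, rfl⟩⟩⟩
        · calc dist (S.phi e y) α = dist (S.phi e y) (S.phi e α) := by rw [hfix]
            _ ≤ dist y α / N := aux_phi_dist S hN e y α
            _ ≤ (1 / N : ℝ) ^ m / N := by gcongr
            _ = (1 / N : ℝ) ^ (m + 1) := by rw [pow_succ]; ring
    have hiA : i ∈ A n := by
      simp only [hA, Finset.mem_filter, Finset.mem_univ, true_and]
      exact h
    have hclos : α ∈ closure (K i) := by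
      rw [Metric.mem_closure_iff]
      intro ε hε
      have h1N : (1 / N : ℝ) < 1 := by
        rw [div_lt_one hN0]; exact_mod_cast (by omega : 1 < N)
      obtain ⟨m, hm⟩ := exists_pow_lt_of_lt_one hε h1N
      obtain ⟨x, hx, hxd⟩ := happrox m i hiA
      exact ⟨x, hx, lt_of_le_of_lt (by rwa [dist_comm]) hm⟩
    rwa [(hcpt i).isClosed.closure_eq] at hclos
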